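/- Let G be a finite graph on vertex set V and B ⊆ V such that G[B] is k-colorable, the induced subgraph on B \ S is (k−ℓ)-colorable for some S ⊆ B with |S| ≤ ℓ, and for every non-empty A ⊆ V \ B it holds 2|E[A]| + |E[A, B \ S]| < (k−ℓ)|A|. Then the induced subgraph of G on V \ S is (k−ℓ)-colorable, and consequently if additionally every vertex of S is adjacent to all of V \ S and S induces a clique, G itself is k-colorable. -/

import Mathlib

open Finset

def edgesWithin {V : Type*} [Fintype V] [DecidableEq V] (G : SimpleGraph V)
    [DecidableRel G.Adj] (A : Finset V) : ℕ :=
  (G.edgeFinset.filter fun e => ∀ v ∈ e, v ∈ A).card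

def edgesBetween {V : Type*} [Fintype V] [DecidableEq V] (G : SimpleGraph V)
    [DecidableRel G.Adj] (A B : Finset V) : ℕ :=
  (G.edgeFinset.filter fun e => ∃ a ∈ A, ∃ b ∈ B, e = s(a, b)).card

section Aux

variable {V : Type*} [Fintype V] [DecidableEq V] (G : SimpleGraph V) [DecidableRel G.Adj]

private def indGraph (A : Finset V) : SimpleGraph V where
  Adj v w := G.Adj v w ∧ v ∈ A ∧ w ∈ A
  symm := ⟨fun v w h => ⟨h.1.symm, h.2.2, h.2.1⟩⟩
  loopless := ⟨fun v h => G.loopless.irrefl v h.1⟩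

instance (A : Finset V) : DecidableRel (indGraph G A).Adj := fun _ _ =>
  inferInstanceAs (Decidable (_ ∧ _))

private lemma sum_filter_card (A C : Finset V) :
    ((A ×ˢ C).filter fun p => G.Adj p.1 p.2).card = ∑ a ∈ A, (C.filter (G.Adj a)).card := by
  rw [Finset.card_filter, Finset.sum_product]
  exact Finset.sum_congr rfl fun a _ => by rw [Finset.card_filter]

private lemma two_mul_edgesWithin (A : Finset V) :
    2 * edgesWithin G A = ∑ a ∈ A, (A.filter (G.Adj a)).card := by
  have h1 : edgesWithin G A = (indGraph G A).edgeFinset.card := by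
    unfold edgesWithin
    congr 1
    ext e
    induction e using Sym2.ind with
    | _ x y =>
      rw [Finset.mem_filter, SimpleGraph.mem_edgeFinset, SimpleGraph.mem_edgeFinset]
      simp only [Finset.mem_filter, SimpleGraph.mem_edgeFinset, SimpleGraph.mem_edgeSet,
        Sym2.mem_iff, indGraph]
      constructor
      · rintro ⟨hadj, hmem⟩
        exact ⟨hadj, hmem x (Or.inl rfl), hmem y (Or.inr rfl)⟩
      · rintro ⟨hadj, hx, hy⟩
        refine ⟨hadj, ?_⟩
        rintro v (rfl | rfl) <;> assumption
  have h2 : (Finset.univ.filter fun (p : V × V) => (indGraph G A).Adj p.1 p.2)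
      = (A ×ˢ A).filter fun p => G.Adj p.1 p.2 := by
    ext p
    rw [Finset.mem_filter, Finset.mem_filter]
    simp only [Finset.mem_filter, Finset.mem_univ, true_and, Finset.mem_product, indGraph]
    tauto
  rw [h1, SimpleGraph.two_mul_card_edgeFinset, h2, sum_filter_card]

private lemma edgesBetween_eq (A C : Finset V) (hd : Disjoint A C) :
    edgesBetween G A C = ∑ a ∈ A, (C.filter (G.Adj a)).card := by
  rw [← sum_filter_card]
  unfold edgesBetween
  symm
  apply Finset.card_bij (fun (p : V × V) _ => s(p.1, p.2))
  · rintro ⟨a, b⟩ hp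
    rw [Finset.mem_filter, Finset.mem_product] at hp
    rw [Finset.mem_filter]
    exact ⟨SimpleGraph.mem_edgeFinset.2 hp.2, a, hp.1.1, b, hp.1.2, rfl⟩
  · rintro ⟨a, b⟩ hp ⟨a', b'⟩ hp' heq
    rw [Finset.mem_filter, Finset.mem_product] at hp hp'
    rw [Sym2.eq_iff] at heq
    rcases heq with ⟨rfl, rfl⟩ | ⟨rfl, rfl⟩
    · rfl
    · exact absurd hp.1.1 (Finset.disjoint_right.mp hd hp'.1.2)
  · intro e he
    rw [Finset.mem_filter] at he
    obtain ⟨hmem, a, ha, b, hb, rfl⟩ := he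
    refine ⟨(a, b), ?_, rfl⟩
    rw [Finset.mem_filter, Finset.mem_product]
    exact ⟨⟨ha, hb⟩, (SimpleGraph.mem_edgeSet G).mp (SimpleGraph.mem_edgeFinset.mp hmem)⟩

end Aux

theorem stmt13 {V : Type*} [Fintype V] [DecidableEq V] (G : SimpleGraph V) [DecidableRel G.Adj]
    (k ℓ : ℕ) (hℓk : ℓ ≤ k) (B S : Finset V) (hSB : S ⊆ B) (hScard : S.card ≤ ℓ)
    (hBcol : (G.induce (B : Set V)).Colorable k)
    (hBScol : (G.induce ((B \ S : Finset V) : Set V)).Colorable (k - ℓ))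
    (h : ∀ A : Finset V, A ⊆ Bᶜ → A.Nonempty →
      2 * edgesWithin G A + edgesBetween G A (B \ S) < (k - ℓ) * A.card) :
    (G.induce ((Sᶜ : Finset V) : Set V)).Colorable (k - ℓ) ∧
      ((∀ s ∈ S, ∀ v : V, v ∉ S → G.Adj s v) →
       (∀ s ∈ S, ∀ s' ∈ S, s ≠ s' → G.Adj s s') → G.Colorable k) := by
  set n := k - ℓ with hn
  -- base nat coloring of B \ S
  obtain ⟨C0, hC0⟩ := (SimpleGraph.colorable_iff_exists_bdd_nat_coloring n).mp hBScol
  have base : ∃ f : V → ℕ, (∀ a ∈ B \ S, f a < n) ∧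
      (∀ a ∈ B \ S, ∀ b ∈ B \ S, G.Adj a b → f a ≠ f b) := by
    refine ⟨fun v => if hv : v ∈ B \ S then C0 ⟨v, Finset.mem_coe.mpr hv⟩ else 0, ?_, ?_⟩
    · intro a ha; simp only [dif_pos ha]; exact hC0 _
    · intro a ha b hb hadj
      simp only [dif_pos ha, dif_pos hb]
      exact C0.valid (by exact hadj)
  -- low degree vertex in any nonempty A ⊆ Bᶜ
  have step : ∀ A : Finset V, A ⊆ Bᶜ → A.Nonempty →
      ∃ v ∈ A, (A.filter (G.Adj v)).card + ((B \ S).filter (G.Adj v)).card < n := by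
    intro A hAB hne
    have hd : Disjoint A (B \ S) := by
      rw [Finset.disjoint_left]
      intro a ha hab
      exact (Finset.mem_compl.mp (hAB ha)) (Finset.mem_sdiff.mp hab).1
    have := h A hAB hne
    rw [two_mul_edgesWithin G A, edgesBetween_eq G A (B \ S) hd] at this
    have hsum : ∑ a ∈ A, ((A.filter (G.Adj a)).card + ((B \ S).filter (G.Adj a)).card)
        < ∑ _a ∈ A, n := by
      rw [Finset.sum_add_distrib, Finset.sum_const, smul_eq_mul, mul_comm]
      exact this
    exact Finset.exists_lt_of_sum_lt hsum
  -- main induction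
  have key : ∀ m : ℕ, ∀ A : Finset V, A.card ≤ m → A ⊆ Bᶜ →
      ∃ f : V → ℕ, (∀ a ∈ (B \ S) ∪ A, f a < n) ∧
        (∀ a ∈ (B \ S) ∪ A, ∀ b ∈ (B \ S) ∪ A, G.Adj a b → f a ≠ f b) := by
    intro m
    induction m with
    | zero =>
      intro A hA _
      rw [Nat.le_zero, Finset.card_eq_zero] at hA
      subst hA
      simpa using base
    | succ m ih =>
      intro A hA hAB
      rcases A.eq_empty_or_nonempty with rfl | hne
      · simpa using base
      obtain ⟨v, hv, hdeg⟩ := step A hAB hne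
      have hvB : v ∉ B := Finset.mem_compl.mp (hAB hv)
      obtain ⟨f, hfb, hfp⟩ := ih (A.erase v)
        (by rw [Finset.card_erase_of_mem hv]; omega)
        ((Finset.erase_subset v A).trans hAB)
      set W := (B \ S) ∪ A.erase v with hW
      have hWeq : ∀ b, b ∈ (B \ S) ∪ A → b ≠ v → b ∈ W := by
        intro b hb hbv
        rw [Finset.mem_union] at hb ⊢
        rcases hb with hb | hb
        · exact Or.inl hb
        · exact Or.inr (Finset.mem_erase.mpr ⟨hbv, hb⟩)
      set T := (W.filter (G.Adj v)).image f with hT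
      have hTcard : T.card < n := by
        have h1 : W.filter (G.Adj v) = (B \ S).filter (G.Adj v) ∪ (A.erase v).filter (G.Adj v) :=
          Finset.filter_union _ _ _
        have h2 : ((A.erase v).filter (G.Adj v)).card ≤ (A.filter (G.Adj v)).card :=
          Finset.card_le_card (Finset.filter_subset_filter _ (Finset.erase_subset v A))
        calc T.card ≤ (W.filter (G.Adj v)).card := Finset.card_image_le
          _ ≤ ((B \ S).filter (G.Adj v)).card + ((A.erase v).filter (G.Adj v)).card := by
              rw [h1]; exact Finset.card_union_le _ _
          _ < n := by omega
      have hTsub : T ⊆ Finset.range n := by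
        intro c hc
        obtain ⟨w, hw, rfl⟩ := Finset.mem_image.mp hc
        exact Finset.mem_range.mpr (hfb w (Finset.mem_filter.mp hw).1)
      have hfree : (Finset.range n \ T).Nonempty := by
        rw [← Finset.card_pos, Finset.card_sdiff_of_subset hTsub, Finset.card_range]
        omega
      obtain ⟨c, hc⟩ := hfree
      rw [Finset.mem_sdiff, Finset.mem_range] at hc
      refine ⟨Function.update f v c, ?_, ?_⟩
      · intro a ha
        by_cases hav : a = v
        · subst hav; rw [Function.update_self]; exact hc.1
        · rw [Function.update_of_ne hav]; exact hfb a (hWeq a ha hav)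
      · intro a ha b hb hadj
        by_cases hav : a = v <;> by_cases hbv : b = v
        · subst hav; subst hbv; exact absurd rfl hadj.ne
        · subst hav
          rw [Function.update_self, Function.update_of_ne hbv]
          intro heq
          exact hc.2 (heq ▸ Finset.mem_image_of_mem f
            (Finset.mem_filter.mpr ⟨hWeq b hb hbv, hadj⟩))
        · subst hbv
          rw [Function.update_self, Function.update_of_ne hav]
          intro heq
          exact hc.2 (heq ▸ Finset.mem_image_of_mem f
            (Finset.mem_filter.mpr ⟨hWeq a ha hav, hadj.symm⟩))
        · rw [Function.update_of_ne hav, Function.update_of_ne hbv]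
          exact hfp a (hWeq a ha hav) b (hWeq b hb hbv) hadj
  have hU : (B \ S) ∪ Bᶜ = Sᶜ := by
    ext v
    simp only [Finset.mem_union, Finset.mem_sdiff, Finset.mem_compl]
    constructor
    · rintro (⟨_, hvS⟩ | hvB)
      · exact hvS
      · exact fun hvS => hvB (hSB hvS)
    · intro hvS
      by_cases hvB : v ∈ B
      · exact Or.inl ⟨hvB, hvS⟩
      · exact Or.inr hvB
  obtain ⟨f, hfb, hfp⟩ := key Bᶜ.card Bᶜ le_rfl (Finset.Subset.refl _)
  rw [hU] at hfb hfp
  constructor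
  · rw [SimpleGraph.colorable_iff_exists_bdd_nat_coloring]
    refine ⟨SimpleGraph.Coloring.mk (fun x => f x.1) ?_, fun x => hfb x.1 (Finset.mem_coe.mp x.2)⟩
    intro a b hab
    exact hfp a.1 (Finset.mem_coe.mp a.2) b.1 (Finset.mem_coe.mp b.2) hab
  · intro _ _
    rw [SimpleGraph.colorable_iff_exists_bdd_nat_coloring]
    set L := S.toList with hL
    have hg : ∀ v ∈ S, List.idxOf v L < ℓ := by
      intro v hv
      have h1 : List.idxOf v L < L.length :=
        List.idxOf_lt_length_iff.mpr (Finset.mem_toList.mpr hv)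
      rw [Finset.length_toList] at h1
      exact h1.trans_le hScard
    refine ⟨SimpleGraph.Coloring.mk
      (fun v => if v ∈ S then n + List.idxOf v L else f v) ?_, ?_⟩
    · intro a b hadj
      by_cases haS : a ∈ S <;> by_cases hbS : b ∈ S <;>
        simp only [haS, hbS, if_true, if_false]
      · intro heq
        have := Nat.add_left_cancel heq
        exact hadj.ne ((List.idxOf_inj (Finset.mem_toList.mpr haS)).mp this)
      · have : f b < n := hfb b (Finset.mem_compl.mpr hbS)
        omega
      · have : f a < n := hfb a (Finset.mem_compl.mpr haS)
        omega
      · exact hfp a (Finset.mem_compl.mpr haS) b (Finset.mem_compl.mpr hbS) hadj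
    · intro v
      show (if v ∈ S then n + List.idxOf v L else f v) < k
      by_cases hvS : v ∈ S
      · rw [if_pos hvS]
        have := hg v hvS
        omega
      · rw [if_neg hvS]
        have : f v < n := hfb v (Finset.mem_compl.mpr hvS)
        omega
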